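/- For mixed birth-death/death-birth updating on the cycle with mixing parameter δ ∈ [0,1] and r ≥ 1, the forward bias of any state s with 1 < |s| < N−1 satisfies γ_s^δ ≤ r, with equality when the mutants form a single cluster. -/

import Mathlib

/-- Forward bias of a state on the cycle of `N` individuals with `m` mutants of fitness
`r`, under mixed birth-death/death-birth updating with mixing parameter `δ`
(DB with probability `δ`, BD with probability `1−δ`):
`γ_s^δ = [(1−δ)·r(xA+yA)/(mr+N−m) + δ·(xB + (2r/(1+r))yB)/N]
       / [(1−δ)·(xA+yA)/(mr+N−m) + δ·(xA + (2/(1+r))yA)/N]`. -/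
noncomputable def gammaMix (N m : ℕ) (r δ : ℝ) (xA yA xB yB : ℕ) : ℝ :=
  ((1 - δ) * (r * ((xA : ℝ) + yA)) / (m * r + ((N : ℝ) - m)) +
      δ * ((xB : ℝ) + (2 * r / (1 + r)) * yB) / N) /
  ((1 - δ) * ((xA : ℝ) + yA) / (m * r + ((N : ℝ) - m)) +
      δ * ((xA : ℝ) + (2 / (1 + r)) * yA) / N)

lemma convex_pos {a b δ : ℝ} (ha : 0 < a) (hb : 0 < b) (hδ0 : 0 ≤ δ) (hδ1 : δ ≤ 1) :
    0 < (1 - δ) * a + δ * b := by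
  rcases le_total a b with h | h
  · have h1 : (1 - δ) * a + δ * a ≤ (1 - δ) * a + δ * b :=
      add_le_add_right (mul_le_mul_of_nonneg_left h hδ0) _
    nlinarith
  · have h1 : (1 - δ) * b + δ * b ≤ (1 - δ) * a + δ * b :=
      add_le_add_left (mul_le_mul_of_nonneg_left h (by linarith)) _
    nlinarith

/-- For mixed BD/DB updating on the cycle with mixing parameter `δ ∈ [0,1]` and `r ≥ 1`,
the forward bias of any state with `1 < m < N−1` mutants satisfies `γ_s^δ ≤ r`, with
equality when the mutants form a single cluster (`xA = xB = 0`, `yA = yB = 1`). -/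
theorem mixed_bias_le_r (N m xA yA xB yB : ℕ) (r δ : ℝ)
    (hr : 1 ≤ r) (hδ0 : 0 ≤ δ) (hδ1 : δ ≤ 1)
    (hm1 : 1 < m) (hm2 : m < N - 1)
    (hclusters : xA + yA = xB + yB) (hcl1 : 1 ≤ xA + yA)
    (hsizeA : xA + 2 * yA ≤ m) (hsizeB : xB + 2 * yB ≤ N - m) :
    gammaMix N m r δ xA yA xB yB ≤ r ∧ gammaMix N m r δ 0 1 0 1 = r := by
  have hr0 : (0:ℝ) < r := lt_of_lt_of_le one_pos hr
  have hr1 : (0:ℝ) < 1 + r := by linarith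
  have hmN : m + 2 ≤ N := by omega
  have hmNR : (m:ℝ) + 2 ≤ N := by exact_mod_cast hmN
  have hm2R : (2:ℝ) ≤ m := by exact_mod_cast hm1
  have hNpos : (0:ℝ) < N := by linarith
  have hD : (0:ℝ) < m * r + ((N:ℝ) - m) := by nlinarith
  have hS : (1:ℝ) ≤ (xA:ℝ) + yA := by exact_mod_cast hcl1
  have hE : (xA:ℝ) + yA = (xB:ℝ) + yB := by exact_mod_cast hclusters
  have hxA : (0:ℝ) ≤ xA := Nat.cast_nonneg _
  have hyA : (0:ℝ) ≤ yA := Nat.cast_nonneg _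
  have hxB : (0:ℝ) ≤ xB := Nat.cast_nonneg _
  have hyB : (0:ℝ) ≤ yB := Nat.cast_nonneg _
  -- positivity of second denominator ingredient
  have hQ : (0:ℝ) < (xA:ℝ) + (2 / (1 + r)) * yA := by
    have h2 : (0:ℝ) < 2 / (1 + r) := by positivity
    have hc1 : 2 / (1 + r) ≤ 1 := by rw [div_le_one hr1]; linarith
    nlinarith [mul_nonneg (sub_nonneg.mpr hc1) hxA]
  have hd : (0:ℝ) < (1 - δ) * ((xA : ℝ) + yA) / (m * r + ((N : ℝ) - m)) +
      δ * ((xA : ℝ) + (2 / (1 + r)) * yA) / N := by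
    have := convex_pos (a := ((xA:ℝ) + yA) / (m * r + ((N:ℝ) - m)))
      (b := ((xA:ℝ) + (2 / (1 + r)) * yA) / N)
      (by positivity) (by positivity) hδ0 hδ1
    calc (0:ℝ) < (1 - δ) * (((xA:ℝ) + yA) / (m * r + ((N:ℝ) - m))) +
        δ * (((xA:ℝ) + (2 / (1 + r)) * yA) / N) := this
      _ = _ := by ring
  -- key inequality
  have key : (xB:ℝ) + (2 * r / (1 + r)) * yB ≤ r * ((xA:ℝ) + (2 / (1 + r)) * yA) := by
    have h1 : (1 + r) * ((xB:ℝ) + (2 * r / (1 + r)) * yB) = (1 + r) * xB + 2 * r * yB := by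
      field_simp
    have h2 : (1 + r) * (r * ((xA:ℝ) + (2 / (1 + r)) * yA)) = r * (1 + r) * xA + 2 * r * yA := by
      field_simp
    have h3 : (1 + r) * ((xB:ℝ) + (2 * r / (1 + r)) * yB) ≤
        (1 + r) * (r * ((xA:ℝ) + (2 / (1 + r)) * yA)) := by
      rw [h1, h2]
      nlinarith [mul_nonneg (sub_nonneg.mpr hr) hxB, mul_nonneg (mul_nonneg hr0.le (sub_nonneg.mpr hr)) hxA]
    exact le_of_mul_le_mul_left h3 hr1
  constructor
  · rw [gammaMix, div_le_iff₀ hd]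
    have step : δ * ((xB:ℝ) + (2 * r / (1 + r)) * yB) / N ≤
        δ * (r * ((xA:ℝ) + (2 / (1 + r)) * yA)) / N := by
      apply div_le_div_of_nonneg_right ?_ hNpos.le
      exact mul_le_mul_of_nonneg_left key hδ0
    have eq1 : r * ((1 - δ) * ((xA : ℝ) + yA) / (m * r + ((N : ℝ) - m)) +
        δ * ((xA : ℝ) + (2 / (1 + r)) * yA) / N) =
        (1 - δ) * (r * ((xA : ℝ) + yA)) / (m * r + ((N : ℝ) - m)) +
        δ * (r * ((xA:ℝ) + (2 / (1 + r)) * yA)) / N := by ring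
    rw [eq1]
    linarith
  · rw [gammaMix]
    push_cast
    have hd0 : (0:ℝ) < (1 - δ) * ((0:ℝ) + 1) / (m * r + ((N : ℝ) - m)) +
        δ * ((0:ℝ) + (2 / (1 + r)) * 1) / N := by
      have := convex_pos (a := ((0:ℝ) + 1) / (m * r + ((N:ℝ) - m)))
        (b := ((0:ℝ) + (2 / (1 + r)) * 1) / N)
        (by positivity) (by positivity) hδ0 hδ1
      calc (0:ℝ) < (1 - δ) * (((0:ℝ) + 1) / (m * r + ((N:ℝ) - m))) +
          δ * (((0:ℝ) + (2 / (1 + r)) * 1) / N) := this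
        _ = _ := by ring
    have hnum : (1 - δ) * (r * ((0:ℝ) + 1)) / (m * r + ((N : ℝ) - m)) +
        δ * ((0:ℝ) + (2 * r / (1 + r)) * 1) / N =
        r * ((1 - δ) * ((0:ℝ) + 1) / (m * r + ((N : ℝ) - m)) +
          δ * ((0:ℝ) + (2 / (1 + r)) * 1) / N) := by
      field_simp
      ring
    rw [hnum, mul_div_assoc, div_self (ne_of_gt hd0), mul_one]
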